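/- Suppose F satisfies (F1)–(F2), each estimator η_N satisfies (A1)–(A2), λ ∈ (0, 1/C₅) with C₅ := C₃ C₁ and C₃ := 1 + β/ν, and the perturbed contraction property holds: there are constants 0 < q < 1 and C₇ > 0 with η_{N+1}(u*_{N+1})² ≤ q η_N(u*_N)² + C₇ ‖u*_{N+1} − u*_N‖_X² for all N ≥ 0. Assume that for each N ≥ 0 there are elements w_N, u_N ∈ X_N such that a(w_N; u_N, v) = a(w_N; w_N, v) − ⟨F(w_N), v⟩ for all v ∈ X_N and ‖u_N − w_N‖_X ≤ λ η_N(u_N). Then u_N → u* in X as N → ∞. -/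

import Mathlib

open Filter

lemma auxA (a b : ℕ → ℝ) (q : ℝ) (hq0 : 0 ≤ q) (hq1 : q < 1)
    (ha : ∀ n, 0 ≤ a n) (hrec : ∀ n, a (n + 1) ≤ q * a n + b n)
    (hb : Tendsto b atTop (nhds 0)) : Tendsto a atTop (nhds 0) := by
  rw [Metric.tendsto_atTop] at hb ⊢
  intro ε hε
  have hq1' : 0 < 1 - q := by linarith
  have hε2 : 0 < ε * (1 - q) / 2 := by positivity
  obtain ⟨M, hM⟩ := hb _ hε2
  have key : ∀ k, a (M + k) ≤ q ^ k * a M + ε / 2 := by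
    intro k
    induction k with
    | zero => simp; nlinarith [ha M]
    | succ k ih =>
      have hbk : b (M + k) ≤ ε * (1 - q) / 2 := by
        have := hM (M + k) (by omega)
        rw [Real.dist_eq, sub_zero] at this
        exact (abs_le.mp this.le).2
      have := hrec (M + k)
      have : a (M + k + 1) ≤ q * (q ^ k * a M + ε / 2) + ε * (1 - q) / 2 := by
        nlinarith
      calc a (M + (k+1)) = a (M + k + 1) := by ring_nf
        _ ≤ q * (q ^ k * a M + ε / 2) + ε * (1 - q) / 2 := this
        _ ≤ q ^ (k+1) * a M + ε / 2 := by ring_nf; nlinarith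
  have hgeo : Tendsto (fun k => q ^ k * a M) atTop (nhds 0) := by
    simpa using (tendsto_pow_atTop_nhds_zero_of_lt_one hq0 hq1).mul_const (a M)
  rw [Metric.tendsto_atTop] at hgeo
  obtain ⟨K, hK⟩ := hgeo _ (half_pos hε)
  refine ⟨M + K, fun n hn => ?_⟩
  have h1 : a n ≤ q ^ (n - M) * a M + ε / 2 := by
    have := key (n - M); rwa [Nat.add_sub_cancel' (by omega)] at this
  have h2 : q ^ (n - M) * a M < ε / 2 := by
    have := hK (n - M) (by omega)
    rw [Real.dist_eq, sub_zero] at this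
    calc q ^ (n-M) * a M ≤ |q ^ (n-M) * a M| := le_abs_self _
      _ < ε / 2 := this
  rw [Real.dist_eq, sub_zero, abs_of_nonneg (ha n)]
  linarith


lemma auxB {X : Type*} [NormedAddCommGroup X] [InnerProductSpace ℝ X] [CompleteSpace X]
    (F : X → X →L[ℝ] ℝ) (L ν : ℝ) (hL : 0 < L) (hν : 0 < ν)
    (hF1 : ∀ u v w : X, |F u w - F v w| ≤ L * ‖u - v‖ * ‖w‖)
    (hF2 : ∀ u v : X, ν * ‖u - v‖ ^ 2 ≤ F u (u - v) - F v (u - v))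
    (S : Submodule ℝ X) (hS : IsClosed (S : Set X)) :
    ∃ z ∈ S, ∀ v ∈ S, F z v = 0 := by
  haveI : CompleteSpace S := hS.completeSpace_coe
  haveI : Nonempty S := ⟨0⟩
  set R : S → S := fun v => (InnerProductSpace.toDual ℝ S).symm ((F ↑v).comp S.subtypeL) with hR
  have hRapp : ∀ v w : S, (inner ℝ (R v) w : ℝ) = F ↑v ↑w := by
    intro v w
    simp [hR, InnerProductSpace.toDual_symm_apply]
  have hmono : ∀ v w : S, ν * ‖v - w‖ ^ 2 ≤ (inner ℝ (R v - R w) (v - w) : ℝ) := by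
    intro v w
    rw [inner_sub_left, hRapp, hRapp]
    have := hF2 (v : X) (w : X)
    have hc : ((v - w : S) : X) = (v : X) - (w : X) := rfl
    have hn : ‖v - w‖ = ‖(v : X) - (w : X)‖ := by rw [← hc]; rfl
    rw [hn, hc]
    exact this
  have hlip : ∀ v w : S, ‖R v - R w‖ ≤ L * ‖v - w‖ := by
    intro v w
    have h1 : ‖R v - R w‖ ^ 2 = (inner ℝ (R v - R w) (R v - R w) : ℝ) := by
      rw [real_inner_self_eq_norm_sq]
    have h2 : (inner ℝ (R v - R w) (R v - R w) : ℝ) = F ↑v ↑(R v - R w) - F ↑w ↑(R v - R w) := by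
      rw [inner_sub_left, hRapp, hRapp]
    have h3 : F ↑v ↑(R v - R w) - F ↑w ↑(R v - R w) ≤ L * ‖(v:X) - (w:X)‖ * ‖((R v - R w : S) : X)‖ :=
      le_trans (le_abs_self _) (hF1 _ _ _)
    have hc : ‖((R v - R w : S) : X)‖ = ‖R v - R w‖ := rfl
    have hn : ‖(v : X) - (w : X)‖ = ‖v - w‖ := rfl
    rw [hc, hn] at h3
    rcases eq_or_lt_of_le (norm_nonneg (R v - R w)) with h | h
    · rw [← h]; positivity
    · have : ‖R v - R w‖ ^ 2 ≤ L * ‖v - w‖ * ‖R v - R w‖ := by rw [h1, h2]; exact h3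
      nlinarith
  set t : ℝ := ν / L ^ 2 with ht
  have ht0 : 0 < t := by positivity
  set Φ : S → S := fun v => v - t • R v with hΦ
  have hcontr : ∀ v w : S, ‖Φ v - Φ w‖ ^ 2 ≤ (1 - ν ^ 2 / L ^ 2) * ‖v - w‖ ^ 2 := by
    intro v w
    have hexp : Φ v - Φ w = (v - w) - t • (R v - R w) := by
      simp only [hΦ, smul_sub]; abel
    rw [hexp, norm_sub_sq_real, real_inner_smul_right, norm_smul]
    have h1 := hmono v w
    have h2 := hlip v w
    have h3 : ‖t • (R v - R w)‖ = t * ‖R v - R w‖ := by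
      rw [norm_smul, Real.norm_eq_abs, abs_of_pos ht0]
    rw [Real.norm_eq_abs, abs_of_pos ht0]
    have h2sq : ‖R v - R w‖ ^ 2 ≤ (L * ‖v - w‖) ^ 2 := by
      have := norm_nonneg (R v - R w)
      nlinarith
    have h4 : (t * ‖R v - R w‖) ^ 2 ≤ t * ν * ‖v - w‖ ^ 2 := by
      have hh := mul_le_mul_of_nonneg_left h2sq (sq_nonneg t)
      have hteq : t * L ^ 2 = ν := by rw [ht]; field_simp [hL.ne']
      calc (t * ‖R v - R w‖) ^ 2 = t ^ 2 * ‖R v - R w‖ ^ 2 := by ring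
        _ ≤ t ^ 2 * (L * ‖v - w‖) ^ 2 := hh
        _ = t * (t * L ^ 2) * ‖v - w‖ ^ 2 := by ring
        _ = t * ν * ‖v - w‖ ^ 2 := by rw [hteq]
    have h5 : t * (ν * ‖v - w‖ ^ 2) ≤ t * (inner ℝ (v - w) (R v - R w) : ℝ) := by
      apply mul_le_mul_of_nonneg_left _ ht0.le
      rw [real_inner_comm]; exact h1
    have hdiv : ν ^ 2 / L ^ 2 = t * ν := by rw [ht]; ring
    rw [hdiv]
    linarith
  set c : ℝ := max (1 - ν ^ 2 / L ^ 2) 0 with hc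
  have hc1 : c < 1 := by
    apply max_lt _ one_pos
    have : 0 < ν ^ 2 / L ^ 2 := by positivity
    linarith
  have hc0 : 0 ≤ c := le_max_right _ _
  set K : NNReal := ⟨Real.sqrt c, Real.sqrt_nonneg c⟩ with hK
  have hK1 : K < 1 := by
    rw [← NNReal.coe_lt_coe]
    have := Real.sqrt_lt_sqrt hc0 hc1
    rw [Real.sqrt_one] at this; exact this
  have hKlip : LipschitzWith K Φ := by
    apply LipschitzWith.of_dist_le_mul
    intro v w
    rw [dist_eq_norm, dist_eq_norm]
    have h1 : ‖Φ v - Φ w‖ ^ 2 ≤ c * ‖v - w‖ ^ 2 :=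
      le_trans (hcontr v w) (by nlinarith [le_max_left (1 - ν ^ 2 / L ^ 2) 0, sq_nonneg ‖v - w‖])
    have h2 : ‖Φ v - Φ w‖ = Real.sqrt (‖Φ v - Φ w‖ ^ 2) := (Real.sqrt_sq (norm_nonneg _)).symm
    rw [h2]
    calc Real.sqrt (‖Φ v - Φ w‖ ^ 2) ≤ Real.sqrt (c * ‖v - w‖ ^ 2) := Real.sqrt_le_sqrt h1
      _ = Real.sqrt c * ‖v - w‖ := by
          rw [Real.sqrt_mul hc0, Real.sqrt_sq (norm_nonneg _)]
      _ = (K : ℝ) * ‖v - w‖ := rfl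
  have hcw : ContractingWith K Φ := ⟨hK1, hKlip⟩
  set z : S := hcw.fixedPoint Φ with hz
  have hfix : Φ z = z := hcw.fixedPoint_isFixedPt
  have hRz : R z = 0 := by
    have : z - t • R z = z := hfix
    have h2 : t • R z = 0 := by
      have := sub_eq_self.mp this
      exact this
    rcases smul_eq_zero.mp h2 with h | h
    · exact absurd h (ne_of_gt ht0)
    · exact h
  refine ⟨↑z, z.2, fun v hv => ?_⟩
  have := hRapp z ⟨v, hv⟩
  rw [hRz] at this
  simpa using this.symm



set_option autoImplicit false

/-- Convergence of the adaptive ILG outputs: under (F1)–(F2), (A1)–(A2), the stopping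
criterion with `λ ∈ (0, 1/C₅)`, and the perturbed contraction property,
`u_N → u*` in `X` as `N → ∞`. -/
theorem stmt_16
    {X : Type*} [NormedAddCommGroup X] [InnerProductSpace ℝ X] [CompleteSpace X]
    (F : X → X →L[ℝ] ℝ) (L ν : ℝ) (hL : 0 < L) (hν : 0 < ν)
    (hF1 : ∀ u v w : X, |F u w - F v w| ≤ L * ‖u - v‖ * ‖w‖)
    (hF2 : ∀ u v : X, ν * ‖u - v‖ ^ 2 ≤ F u (u - v) - F v (u - v))
    (ustar : X) (hustar : ∀ v : X, F ustar v = 0)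
    (a : X → X →ₗ[ℝ] X →ₗ[ℝ] ℝ) (α β : ℝ) (hα : 0 < α) (hβ : 0 < β)
    (hcoer : ∀ u v : X, α * ‖v‖ ^ 2 ≤ a u v v)
    (hbdd : ∀ u v w : X, a u v w ≤ β * ‖v‖ * ‖w‖)
    (XN : ℕ → Submodule ℝ X) (hclosed : ∀ N : ℕ, IsClosed (XN N : Set X))
    (hnested : ∀ N : ℕ, XN N ≤ XN (N + 1))
    (ustarN : ℕ → X) (hustarN_mem : ∀ N : ℕ, ustarN N ∈ XN N)
    (hustarN : ∀ N : ℕ, ∀ v ∈ XN N, F (ustarN N) v = 0)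
    (η : ℕ → X → ℝ) (C₁ C₂ : ℝ) (hC₁ : 1 ≤ C₁) (hC₂ : 1 ≤ C₂)
    (hηnonneg : ∀ N : ℕ, ∀ v ∈ XN N, 0 ≤ η N v)
    (hA1 : ∀ N : ℕ, ∀ v ∈ XN N, ∀ w ∈ XN N, |η N v - η N w| ≤ C₁ * ‖v - w‖)
    (hA2 : ∀ N : ℕ, ‖ustar - ustarN N‖ ≤ C₂ * η N (ustarN N))
    (C₃ C₅ : ℝ) (hC₃ : C₃ = 1 + β / ν) (hC₅ : C₅ = C₃ * C₁)
    (lam : ℝ) (hlam : 0 < lam) (hlam' : lam < 1 / C₅)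
    (q C₇ : ℝ) (hq0 : 0 < q) (hq1 : q < 1) (hC₇ : 0 < C₇)
    (hperturb : ∀ N : ℕ,
      η (N + 1) (ustarN (N + 1)) ^ 2 ≤
        q * η N (ustarN N) ^ 2 + C₇ * ‖ustarN (N + 1) - ustarN N‖ ^ 2)
    (w u : ℕ → X) (hwmem : ∀ N : ℕ, w N ∈ XN N) (humem : ∀ N : ℕ, u N ∈ XN N)
    (hstep : ∀ N : ℕ, ∀ v ∈ XN N, a (w N) (u N) v = a (w N) (w N) v - F (w N) v)
    (hstop : ∀ N : ℕ, ‖u N - w N‖ ≤ lam * η N (u N)) :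
    Filter.Tendsto u Filter.atTop (nhds ustar) := by
  classical
  have hC₃pos : 0 < C₃ := by rw [hC₃]; positivity
  have hC₅pos : 0 < C₅ := by rw [hC₅]; nlinarith
  have hlamC₅ : lam * C₅ < 1 := by
    have := (lt_div_iff₀ hC₅pos).mp hlam'
    linarith
  have hδ : 0 < 1 - lam * C₅ := by linarith
  have hmonoXN : Monotone XN := monotone_nat_of_le_succ hnested
  set S : Submodule ℝ X := (⨆ N, XN N).topologicalClosure with hS
  have hSclosed : IsClosed (S : Set X) := Submodule.isClosed_topologicalClosure _
  have hXNle : ∀ N, XN N ≤ S := fun N =>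
    le_trans (le_iSup XN N) (Submodule.le_topologicalClosure _)
  obtain ⟨z, hzS, hz⟩ := auxB F L ν hL hν hF1 hF2 S hSclosed
  -- Céa-type estimate
  have hCea : ∀ N : ℕ, ∀ v ∈ XN N, ν * ‖z - ustarN N‖ ≤ L * ‖z - v‖ := by
    intro N v hv
    have hemem : z - ustarN N ∈ S := sub_mem hzS (hXNle N (hustarN_mem N))
    have h1 : ν * ‖z - ustarN N‖ ^ 2 ≤ F z (z - ustarN N) - F (ustarN N) (z - ustarN N) :=
      hF2 z (ustarN N)
    have h2 : F z (z - ustarN N) = 0 := hz _ hemem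
    have h3 : F (ustarN N) (z - ustarN N)
        = F (ustarN N) (z - v) + F (ustarN N) (v - ustarN N) := by
      rw [← map_add]
      congr 1
      abel
    have h4 : F (ustarN N) (v - ustarN N) = 0 := hustarN N _ (sub_mem hv (hustarN_mem N))
    have h5 : F z (z - v) = 0 := hz _ (sub_mem hzS (hXNle N hv))
    have h6 : ν * ‖z - ustarN N‖ ^ 2 ≤ F z (z - v) - F (ustarN N) (z - v) := by
      rw [h2, h3, h4] at h1
      linarith
    have h7 : F z (z - v) - F (ustarN N) (z - v) ≤ L * ‖z - ustarN N‖ * ‖z - v‖ :=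
      le_trans (le_abs_self _) (hF1 z (ustarN N) (z - v))
    have h8 : ν * ‖z - ustarN N‖ ^ 2 ≤ L * ‖z - ustarN N‖ * ‖z - v‖ := le_trans h6 h7
    rcases eq_or_lt_of_le (norm_nonneg (z - ustarN N)) with h | h
    · rw [← h, mul_zero]
      positivity
    · nlinarith
  -- convergence of the Galerkin solutions to z
  have hconv : Tendsto ustarN atTop (nhds z) := by
    rw [Metric.tendsto_atTop]
    intro ε hε
    have hzcl : z ∈ closure ((⨆ N, XN N : Submodule ℝ X) : Set X) := by
      have : z ∈ (S : Set X) := hzS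
      rwa [hS, Submodule.topologicalClosure_coe] at this
    have hε' : 0 < ε * ν / (2 * L) := by positivity
    obtain ⟨x, hxmem, hxd⟩ := Metric.mem_closure_iff.mp hzcl _ hε'
    have : ∃ M, x ∈ XN M := by
      have hdir : Directed (· ≤ ·) XN := hmonoXN.directed_le
      have := (Submodule.coe_iSup_of_directed XN hdir) ▸ hxmem
      simpa using this
    obtain ⟨M, hxM⟩ := this
    refine ⟨M, fun N hN => ?_⟩
    have hxN : x ∈ XN N := hmonoXN hN hxM
    have hc := hCea N x hxN
    have hd : ‖z - x‖ < ε * ν / (2 * L) := by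
      rw [Metric.mem_closure_iff] at hzcl
      rw [dist_eq_norm] at hxd
      exact hxd
    have hL' : L * ‖z - x‖ < L * (ε * ν / (2 * L)) := by
      exact mul_lt_mul_of_pos_left hd hL
    have heq : L * (ε * ν / (2 * L)) = ε * ν / 2 := by field_simp
    rw [dist_eq_norm, ← norm_sub_rev]
    have : ν * ‖z - ustarN N‖ < ν * ε := by
      rw [heq] at hL'
      nlinarith
    exact (mul_lt_mul_iff_right₀ hν).mp this
  -- the perturbation terms tend to zero
  have hdiff : Tendsto (fun N => C₇ * ‖ustarN (N + 1) - ustarN N‖ ^ 2) atTop (nhds 0) := by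
    have h1 : Tendsto (fun N => ustarN (N + 1)) atTop (nhds z) :=
      hconv.comp (tendsto_add_atTop_nat 1)
    have h2 : Tendsto (fun N => ustarN (N + 1) - ustarN N) atTop (nhds (z - z)) :=
      h1.sub hconv
    rw [sub_self] at h2
    have h3 := ((h2.norm.pow 2).const_mul C₇)
    simpa using h3
  -- estimator sequence tends to zero
  have hη2 : Tendsto (fun N => η N (ustarN N) ^ 2) atTop (nhds 0) :=
    auxA _ _ q hq0.le hq1 (fun n => sq_nonneg _) hperturb hdiff
  have hηnn : ∀ N, 0 ≤ η N (ustarN N) := fun N => hηnonneg N _ (hustarN_mem N)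
  have hη : Tendsto (fun N => η N (ustarN N)) atTop (nhds 0) := by
    have h := (Real.continuous_sqrt.tendsto 0).comp hη2
    simp only [Function.comp_def, Real.sqrt_zero] at h
    have heq : (fun N => Real.sqrt (η N (ustarN N) ^ 2)) = fun N => η N (ustarN N) :=
      funext fun N => Real.sqrt_sq (hηnn N)
    rwa [heq] at h
  -- pointwise bound for the output
  set K' : ℝ := C₃ * lam / (1 - lam * C₅) + C₂ with hK'
  have hbound : ∀ N, ‖u N - ustar‖ ≤ K' * η N (ustarN N) := by
    intro N
    have hd := hstop N
    have hηuN : 0 ≤ η N (u N) := hηnonneg N _ (humem N)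
    have hkey : F (w N) (w N - ustarN N) = a (w N) (w N - u N) (w N - ustarN N) := by
      have h := hstep N _ (sub_mem (hwmem N) (hustarN_mem N))
      have h2a : a (w N) (w N - u N) = a (w N) (w N) - a (w N) (u N) :=
        map_sub _ _ _
      have h2 : a (w N) (w N - u N) (w N - ustarN N)
          = a (w N) (w N) (w N - ustarN N) - a (w N) (u N) (w N - ustarN N) := by
        rw [h2a, LinearMap.sub_apply]
      rw [h2, h]
      ring
    have hpmem : w N - ustarN N ∈ XN N := sub_mem (hwmem N) (hustarN_mem N)
    have h1 : ν * ‖w N - ustarN N‖ ^ 2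
        ≤ F (w N) (w N - ustarN N) - F (ustarN N) (w N - ustarN N) := hF2 (w N) (ustarN N)
    have h2 : F (ustarN N) (w N - ustarN N) = 0 := hustarN N _ hpmem
    have h4 : a (w N) (w N - u N) (w N - ustarN N)
        ≤ β * ‖w N - u N‖ * ‖w N - ustarN N‖ := hbdd _ _ _
    have hns : ‖w N - u N‖ = ‖u N - w N‖ := norm_sub_rev _ _
    have h5 : ν * ‖w N - ustarN N‖ ^ 2 ≤ β * ‖u N - w N‖ * ‖w N - ustarN N‖ := by
      rw [hns] at h4
      rw [hkey, h2] at h1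
      linarith
    have h6 : ‖w N - ustarN N‖ ≤ β / ν * ‖u N - w N‖ := by
      rcases eq_or_lt_of_le (norm_nonneg (w N - ustarN N)) with h | h
      · rw [← h]
        positivity
      · have h5' : ν * ‖w N - ustarN N‖ * ‖w N - ustarN N‖
            ≤ β * ‖u N - w N‖ * ‖w N - ustarN N‖ := by nlinarith [h5]
        have h5'' := le_of_mul_le_mul_right h5' h
        rw [div_mul_eq_mul_div, le_div_iff₀ hν]
        linarith
    have h7 : ‖u N - ustarN N‖ ≤ C₃ * ‖u N - w N‖ := by
      have ht : ‖u N - ustarN N‖ ≤ ‖u N - w N‖ + ‖w N - ustarN N‖ := by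
        have := dist_triangle (u N) (w N) (ustarN N)
        simpa [dist_eq_norm] using this
      rw [hC₃]
      have : (1 + β / ν) * ‖u N - w N‖ = ‖u N - w N‖ + β / ν * ‖u N - w N‖ := by ring
      linarith
    have h8 : ‖u N - ustarN N‖ ≤ C₃ * (lam * η N (u N)) :=
      le_trans h7 (mul_le_mul_of_nonneg_left hd hC₃pos.le)
    have h9 : η N (u N) - η N (ustarN N) ≤ C₁ * ‖u N - ustarN N‖ :=
      le_trans (le_abs_self _) (hA1 N _ (humem N) _ (hustarN_mem N))
    have h10 : η N (u N) ≤ η N (ustarN N) / (1 - lam * C₅) := by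
      rw [le_div_iff₀ hδ]
      have hm := mul_le_mul_of_nonneg_left h8 (by linarith : (0:ℝ) ≤ C₁)
      have hc : C₁ * (C₃ * (lam * η N (u N))) = lam * C₅ * η N (u N) := by
        rw [hC₅]; ring
      rw [hc] at hm
      linarith
    have h11 : ‖u N - ustar‖ ≤ ‖u N - ustarN N‖ + ‖ustar - ustarN N‖ := by
      have := dist_triangle (u N) (ustarN N) ustar
      have hrev : ‖ustarN N - ustar‖ = ‖ustar - ustarN N‖ := norm_sub_rev _ _
      simpa [dist_eq_norm, hrev] using this
    have h12 : C₃ * (lam * η N (u N)) ≤ C₃ * lam * (η N (ustarN N) / (1 - lam * C₅)) := by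
      have := mul_le_mul_of_nonneg_left h10 (by positivity : (0:ℝ) ≤ C₃ * lam)
      linarith [this]
    have h13 : C₃ * lam * (η N (ustarN N) / (1 - lam * C₅))
        = C₃ * lam / (1 - lam * C₅) * η N (ustarN N) := by ring
    have h14 := hA2 N
    rw [hK']
    have hexp : (C₃ * lam / (1 - lam * C₅) + C₂) * η N (ustarN N)
        = C₃ * lam / (1 - lam * C₅) * η N (ustarN N) + C₂ * η N (ustarN N) := by ring
    rw [hexp]
    linarith
  rw [tendsto_iff_norm_sub_tendsto_zero]
  apply squeeze_zero (fun N => norm_nonneg _) hbound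
  simpa using hη.const_mul K'
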